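/- A set A ⊆ ℕ is dynamically thick if and only if there exist a robustly syndetic collection 𝒞 of subsets of ℕ and, for each B ∈ 𝒞, a thick set H_B ⊆ ℕ, such that A = ⋃_{B∈𝒞} (B ∩ H_B). -/

import Mathlib

/-- The set `A - n`, difference taken inside the positive integers:
`A - n = {m : m >= 1 and m + n ∈ A}`. -/
def NSub (A : Set ℕ) (n : ℕ) : Set ℕ := {m : ℕ | 0 < m ∧ m + n ∈ A}

/-- `S ⊆ ℕ` is syndetic if `ℕ = ⋃_{i=1}^{N} (S - i)` for some `N ≥ 1`. -/
def Syndetic (S : Set ℕ) : Prop :=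
  ∃ N : ℕ, 0 < N ∧ ∀ m : ℕ, 0 < m → ∃ i : ℕ, 1 ≤ i ∧ i ≤ N ∧ m + i ∈ S

/-- `S ⊆ ℕ` is thick if every finite subset of `ℕ` has a translate inside `S`. -/
def Thick (S : Set ℕ) : Prop :=
  ∀ F : Finset ℕ, ∃ n : ℕ, 0 < n ∧ ∀ f ∈ F, f + n ∈ S

/-- A topological dynamical system: a nonempty compact metric space together with a
continuous self-map. -/
structure MetricDynSystem where
  carrier : Type
  [metric : MetricSpace carrier]
  [cpt : CompactSpace carrier]
  [carrier_nonempty : Nonempty carrier]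
  map : carrier → carrier
  continuous_map : Continuous map

attribute [instance] MetricDynSystem.metric MetricDynSystem.cpt MetricDynSystem.carrier_nonempty

/-- A system is minimal if every point has dense forward orbit `{T^n x : n ∈ ℕ}`. -/
def MetricDynSystem.Minimal (S : MetricDynSystem) : Prop :=
  ∀ x : S.carrier, Dense {y : S.carrier | ∃ n : ℕ, 0 < n ∧ S.map^[n] x = y}

/-- `R(x, U)`: the set of (positive) times at which `x` visits `U`. -/
def RetTimes (S : MetricDynSystem) (x : S.carrier) (U : Set S.carrier) : Set ℕ :=
  {n : ℕ | 0 < n ∧ S.map^[n] x ∈ U}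

/-- `A` is dynamically thick: for every minimal system, every point `x` and every
nonempty open `U`, some `n ∈ A` has `T^n x ∈ U`. -/
def DynThick (A : Set ℕ) : Prop :=
  ∀ S : MetricDynSystem, S.Minimal →
    ∀ (x : S.carrier) (U : Set S.carrier), IsOpen U → U.Nonempty →
      ∃ n ∈ A, 0 < n ∧ S.map^[n] x ∈ U

/-- `A` is dynamically syndetic: it contains a set of return times `R(x, U)` for a
minimal system and a nonempty open `U`. -/
def DynSyndetic (A : Set ℕ) : Prop :=
  ∃ S : MetricDynSystem, S.Minimal ∧
    ∃ (x : S.carrier) (U : Set S.carrier), IsOpen U ∧ U.Nonempty ∧ RetTimes S x U ⊆ A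

/-- A collection `C` of subsets of `ℕ` is robustly syndetic if every dynamically
syndetic set has syndetic intersection with some member of `C`. -/
def RobustlySyndetic (C : Set (Set ℕ)) : Prop :=
  ∀ D : Set ℕ, DynSyndetic D → ∃ B ∈ C, Syndetic (D ∩ B)

/-! ### Basic lemmas -/

lemma syndetic_of_subset {S T : Set ℕ} (h : S ⊆ T) (hS : Syndetic S) : Syndetic T := by
  obtain ⟨N, hN, hs⟩ := hS
  exact ⟨N, hN, fun m hm => by
    obtain ⟨i, h1, h2, h3⟩ := hs m hm; exact ⟨i, h1, h2, h h3⟩⟩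

/-- In a minimal system, returns to a nonempty open set happen with bounded gaps
(uniformly over the starting point). -/
lemma uniform_return (S : MetricDynSystem) (hS : S.Minimal)
    (U : Set S.carrier) (hU : IsOpen U) (hne : U.Nonempty) :
    ∃ N, 0 < N ∧ ∀ y : S.carrier, ∃ i, 1 ≤ i ∧ i ≤ N ∧ S.map^[i] y ∈ U := by
  have hcover : (Set.univ : Set S.carrier) ⊆ ⋃ n : ℕ, (S.map^[n+1]) ⁻¹' U := by
    intro y _
    obtain ⟨z, hz, hzU⟩ := (hS y).exists_mem_open hU hne
    obtain ⟨n, hn, hzn⟩ := hz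
    obtain ⟨k, rfl⟩ := Nat.exists_eq_add_of_lt hn
    simp only [Set.mem_iUnion, Set.mem_preimage]
    refine ⟨k, ?_⟩
    have : 0 + k + 1 = k + 1 := by omega
    rw [this] at hzn
    rwa [hzn]
  obtain ⟨t, ht⟩ := IsCompact.elim_finite_subcover isCompact_univ
    (fun n : ℕ => (S.map^[n+1]) ⁻¹' U)
    (fun n => (S.continuous_map.iterate (n+1)).isOpen_preimage U hU) hcover
  refine ⟨t.sup id + 1, Nat.succ_pos _, fun y => ?_⟩
  have := ht (Set.mem_univ y)
  simp only [Set.mem_iUnion, Set.mem_preimage] at this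
  obtain ⟨n, hnt, hny⟩ := this
  exact ⟨n+1, Nat.le_add_left 1 n, by
    have : n ≤ t.sup id := Finset.le_sup (f := id) hnt
    omega, hny⟩

lemma retTimes_syndetic_from (S : MetricDynSystem) (hS : S.Minimal) (x : S.carrier)
    (U : Set S.carrier) (hU : IsOpen U) (hne : U.Nonempty) :
    ∃ N, 0 < N ∧ ∀ m : ℕ, ∃ i, 1 ≤ i ∧ i ≤ N ∧ (m + i) ∈ RetTimes S x U := by
  obtain ⟨N, hN, hret⟩ := uniform_return S hS U hU hne
  refine ⟨N, hN, fun m => ?_⟩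
  obtain ⟨i, h1, h2, h3⟩ := hret (S.map^[m] x)
  refine ⟨i, h1, h2, ⟨by omega, ?_⟩⟩
  rwa [Nat.add_comm, Function.iterate_add_apply]

lemma retTimes_syndetic (S : MetricDynSystem) (hS : S.Minimal) (x : S.carrier)
    (U : Set S.carrier) (hU : IsOpen U) (hne : U.Nonempty) :
    Syndetic (RetTimes S x U) := by
  obtain ⟨N, hN, h⟩ := retTimes_syndetic_from S hS x U hU hne
  exact ⟨N, hN, fun m _ => h m⟩

lemma dynSyndetic_syndetic {D : Set ℕ} (hD : DynSyndetic D) : Syndetic D := by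
  obtain ⟨S, hS, x, U, hU, hne, hsub⟩ := hD
  exact syndetic_of_subset hsub (retTimes_syndetic S hS x U hU hne)

/-! ### The easy (backward) direction -/

lemma backward_direction (A : Set ℕ) (C : Set (Set ℕ)) (hC : RobustlySyndetic C)
    (H : Set ℕ → Set ℕ) (hH : ∀ B ∈ C, Thick (H B)) (hA : A = ⋃ B ∈ C, B ∩ H B) :
    DynThick A := by
  intro S hS x U hU hne
  have hD : DynSyndetic (RetTimes S x U) := ⟨S, hS, x, U, hU, hne, subset_rfl⟩
  obtain ⟨B, hBC, N, hN, hsyn⟩ := hC _ hD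
  obtain ⟨n, hn, hth⟩ := hH B hBC (Finset.range (N+1))
  obtain ⟨i, h1, h2, h3⟩ := hsyn n hn
  have hHB : n + i ∈ H B := by
    have := hth i (Finset.mem_range.2 (by omega))
    rwa [Nat.add_comm] at this
  refine ⟨n + i, ?_, h3.1.1, h3.1.2⟩
  rw [hA]
  exact Set.mem_biUnion hBC ⟨h3.2, hHB⟩


/-! ### Part A: abstract multiscale placement combinatorics -/

/-- reserve sizes -/
def Mres (G L : ℕ → ℕ) : ℕ → ℕ
  | 0 => 0
  | (σ+1) => Mres G L σ + G (σ+1) + 3 * L (σ+1) + 4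

/-- coverage diameters -/
def Dcov (G L : ℕ → ℕ) (ℓ : ℕ) : ℕ := 2 * Mres G L ℓ + 2 * L ℓ + G ℓ + 4

lemma Mres_mono (G L : ℕ → ℕ) : Monotone (Mres G L) := by
  apply monotone_nat_of_le_succ
  intro n
  simp only [Mres]
  omega

/-- abstract occurrences generated by a set of placements -/
inductive AOcc (L : ℕ → ℕ) (P : Set (ℕ × ℕ)) (ℓ : ℕ) : ℕ → Prop
  | base {σ t : ℕ} : (σ, t) ∈ P → ℓ ≤ σ → AOcc L P ℓ t
  | nest {σ t u : ℕ} : (σ, t) ∈ P → AOcc L P ℓ u → u + L ℓ ≤ L σ → AOcc L P ℓ (t + u)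

/-- a valid position of scale `σ` strictly after `c` (within the syndeticity bound) -/
noncomputable def nextV (V : ℕ → Set ℕ) (G : ℕ → ℕ)
    (hV : ∀ σ m, ∃ t, m < t ∧ t ≤ m + G σ ∧ t ∈ V σ) (σ c : ℕ) : ℕ :=
  Classical.choose (hV σ c)

lemma nextV_lt (V : ℕ → Set ℕ) (G : ℕ → ℕ) (hV : ∀ σ m, ∃ t, m < t ∧ t ≤ m + G σ ∧ t ∈ V σ)
    (σ c : ℕ) : c < nextV V G hV σ c := (Classical.choose_spec (hV σ c)).1

lemma nextV_le (V : ℕ → Set ℕ) (G : ℕ → ℕ) (hV : ∀ σ m, ∃ t, m < t ∧ t ≤ m + G σ ∧ t ∈ V σ)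
    (σ c : ℕ) : nextV V G hV σ c ≤ c + G σ := (Classical.choose_spec (hV σ c)).2.1

lemma nextV_memV (V : ℕ → Set ℕ) (G : ℕ → ℕ) (hV : ∀ σ m, ∃ t, m < t ∧ t ≤ m + G σ ∧ t ∈ V σ)
    (σ c : ℕ) : nextV V G hV σ c ∈ V σ := (Classical.choose_spec (hV σ c)).2.2

/-- the multiscale greedy placement of windows of scales `1,…,s` in `[c, b)`. -/
noncomputable def fillR (V : ℕ → Set ℕ) (G L : ℕ → ℕ)
    (hV : ∀ σ m, ∃ t, m < t ∧ t ≤ m + G σ ∧ t ∈ V σ) : ℕ → ℕ → ℕ → Finset (ℕ × ℕ)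
  | 0, _, _ => ∅
  | (σ+1), c, b =>
    if h : nextV V G hV (σ+1) c + L (σ+1) + Mres G L σ ≤ b then
      fillR V G L hV σ c (nextV V G hV (σ+1) c) ∪ {(σ+1, nextV V G hV (σ+1) c)}
        ∪ fillR V G L hV (σ+1) (nextV V G hV (σ+1) c + L (σ+1)) b
    else fillR V G L hV σ c b
  termination_by σ c b => (σ, b - c)
  decreasing_by
  · exact Prod.Lex.left _ _ (Nat.lt_succ_self σ)
  · apply Prod.Lex.right
    have := nextV_lt V G hV (σ+1) c
    omega
  · exact Prod.Lex.left _ _ (Nat.lt_succ_self σ)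

lemma fillR_mem (V : ℕ → Set ℕ) (G L : ℕ → ℕ)
    (hV : ∀ σ m, ∃ t, m < t ∧ t ≤ m + G σ ∧ t ∈ V σ) :
    ∀ s c b, ∀ p ∈ fillR V G L hV s c b,
    (1 ≤ p.1 ∧ p.1 ≤ s) ∧ (c < p.2 ∧ p.2 + L p.1 ≤ b) ∧ p.2 ∈ V p.1 := by
  intro s c b
  induction s, c, b using fillR.induct V G L hV with
  | case1 c b => simp [fillR]
  | case2 σ c b h ih1 ih2 =>
    intro p hp
    rw [fillR, dif_pos h] at hp
    simp only [Finset.mem_union, Finset.mem_singleton] at hp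
    rcases hp with (hp | hp) | hp
    · obtain ⟨h1, h2, h3⟩ := ih1 p hp
      have := nextV_le V G hV (σ+1) c
      refine ⟨⟨h1.1, by omega⟩, ⟨h2.1, by omega⟩, h3⟩
    · subst hp
      have h1 := nextV_lt V G hV (σ+1) c
      exact ⟨⟨by omega, le_refl _⟩, ⟨h1, by simp; omega⟩, nextV_memV V G hV (σ+1) c⟩
    · obtain ⟨h1, h2, h3⟩ := ih2 p hp
      have := nextV_lt V G hV (σ+1) c
      refine ⟨h1, ⟨by omega, h2.2⟩, h3⟩
  | case3 σ c b h ih =>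
    intro p hp
    rw [fillR, dif_neg h] at hp
    obtain ⟨h1, h2, h3⟩ := ih p hp
    exact ⟨⟨h1.1, by omega⟩, h2, h3⟩

lemma Mres_pos (G L : ℕ → ℕ) {ℓ : ℕ} (h : 1 ≤ ℓ) : 4 ≤ Mres G L ℓ := by
  obtain ⟨σ, rfl⟩ := Nat.exists_eq_add_of_lt h
  simp only [Nat.zero_add, Mres]
  omega

lemma fillR_disj (V : ℕ → Set ℕ) (G L : ℕ → ℕ)
    (hV : ∀ σ m, ∃ t, m < t ∧ t ≤ m + G σ ∧ t ∈ V σ) :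
    ∀ s c b, ∀ p ∈ fillR V G L hV s c b, ∀ q ∈ fillR V G L hV s c b, p ≠ q →
    p.2 + L p.1 ≤ q.2 ∨ q.2 + L q.1 ≤ p.2 := by
  intro s c b
  induction s, c, b using fillR.induct V G L hV with
  | case1 c b => simp [fillR]
  | case2 σ c b h ih1 ih2 =>
    intro p hp q hq hpq
    rw [fillR, dif_pos h] at hp hq
    simp only [Finset.mem_union, Finset.mem_singleton] at hp hq
    set t0 := nextV V G hV (σ+1) c with ht0
    have hmemL := fillR_mem V G L hV σ c t0
    have hmemR := fillR_mem V G L hV (σ+1) (t0 + L (σ+1)) b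
    rcases hp with (hp | hp) | hp <;> rcases hq with (hq | hq) | hq
    · exact ih1 p hp q hq hpq
    · subst hq; exact Or.inl (hmemL p hp).2.1.2
    · have h1 := (hmemL p hp).2.1.2
      have h2 := (hmemR q hq).2.1.1
      left; omega
    · subst hp; exact Or.inr (hmemL q hq).2.1.2
    · subst hp; subst hq; exact absurd rfl hpq
    · subst hp
      have h2 := (hmemR q hq).2.1.1
      left; simp only; omega
    · have h1 := (hmemL q hq).2.1.2
      have h2 := (hmemR p hp).2.1.1
      right; omega
    · subst hq
      have h2 := (hmemR p hp).2.1.1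
      right; simp only; omega
    · exact ih2 p hp q hq hpq
  | case3 σ c b h ih =>
    intro p hp q hq hpq
    rw [fillR, dif_neg h] at hp hq
    exact ih p hp q hq hpq

lemma fillR_des (V : ℕ → Set ℕ) (G L : ℕ → ℕ)
    (hV : ∀ σ m, ∃ t, m < t ∧ t ≤ m + G σ ∧ t ∈ V σ) (ℓ : ℕ) (h1 : 1 ≤ ℓ) :
    ∀ s c b, ℓ ≤ s → c + Mres G L ℓ ≤ b →
    ∃ t, (ℓ, t) ∈ fillR V G L hV s c b ∧ b ≤ t + L ℓ + Mres G L ℓ ∧ t + L ℓ ≤ b := by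
  intro s c b
  induction s, c, b using fillR.induct V G L hV with
  | case1 c b => intro hs _; omega
  | case2 σ c b h ih1 ih2 =>
    intro hs hM
    set t0 := nextV V G hV (σ+1) c with ht0
    rcases Nat.lt_or_ge ℓ (σ+1) with hℓ | hℓ
    · -- ℓ ≤ σ : go right
      have hMσ : Mres G L ℓ ≤ Mres G L σ := Mres_mono G L (by omega)
      obtain ⟨t, htmem, ht1, ht2⟩ := ih2 (by omega) (by omega)
      refine ⟨t, ?_, ht1, ht2⟩
      rw [fillR, dif_pos h]
      simp only [Finset.mem_union]
      exact Or.inr htmem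
    · have hℓeq : ℓ = σ + 1 := by omega
      subst hℓeq
      by_cases h2 : (t0 + L (σ+1)) + Mres G L (σ+1) ≤ b
      · obtain ⟨t, htmem, ht1, ht2⟩ := ih2 (le_refl _) h2
        refine ⟨t, ?_, ht1, ht2⟩
        rw [fillR, dif_pos h]
        simp only [Finset.mem_union]
        exact Or.inr htmem
      · refine ⟨t0, ?_, by omega, by omega⟩
        rw [fillR, dif_pos h]
        simp only [Finset.mem_union, Finset.mem_singleton]
        tauto
  | case3 σ c b h ih =>
    intro hs hM
    rcases Nat.lt_or_ge ℓ (σ+1) with hℓ | hℓ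
    · obtain ⟨t, htmem, ht1, ht2⟩ := ih (by omega) hM
      refine ⟨t, ?_, ht1, ht2⟩
      rw [fillR, dif_neg h]
      exact htmem
    · exfalso
      have hℓeq : ℓ = σ + 1 := by omega
      subst hℓeq
      have h3 := nextV_le V G hV (σ+1) c
      simp only [Mres] at hM
      omega

lemma fillR_lead (V : ℕ → Set ℕ) (G L : ℕ → ℕ)
    (hV : ∀ σ m, ∃ t, m < t ∧ t ≤ m + G σ ∧ t ∈ V σ) (ℓ : ℕ) (h1 : 1 ≤ ℓ) :
    ∀ s c b, ℓ ≤ s → c + Mres G L ℓ ≤ b →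
    ∃ p ∈ fillR V G L hV s c b, ℓ ≤ p.1 ∧ p.2 ≤ c + Mres G L ℓ := by
  intro s c b
  induction s, c, b using fillR.induct V G L hV with
  | case1 c b => intro hs _; omega
  | case2 σ c b h ih1 ih2 =>
    intro hs hM
    set t0 := nextV V G hV (σ+1) c with ht0
    have hmid : ((σ+1 : ℕ), t0) ∈ fillR V G L hV (σ+1) c b := by
      rw [fillR, dif_pos h]
      simp only [Finset.mem_union, Finset.mem_singleton]
      tauto
    rcases Nat.lt_or_ge ℓ (σ+1) with hℓ | hℓ
    · by_cases h2 : c + Mres G L ℓ ≤ t0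
      · obtain ⟨p, hpmem, hp1, hp2⟩ := ih1 (by omega) h2
        refine ⟨p, ?_, hp1, hp2⟩
        rw [fillR, dif_pos h]
        simp only [Finset.mem_union]
        exact Or.inl (Or.inl hpmem)
      · exact ⟨(σ+1, t0), hmid, by omega, by simp only; omega⟩
    · have hℓeq : ℓ = σ + 1 := by omega
      subst hℓeq
      have h3 := nextV_le V G hV (σ+1) c
      refine ⟨(σ+1, t0), hmid, le_refl _, ?_⟩
      simp only [Mres]
      omega
  | case3 σ c b h ih =>
    intro hs hM
    rcases Nat.lt_or_ge ℓ (σ+1) with hℓ | hℓ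
    · obtain ⟨p, hpmem, hp1, hp2⟩ := ih (by omega) hM
      refine ⟨p, ?_, hp1, hp2⟩
      rw [fillR, dif_neg h]
      exact hpmem
    · exfalso
      have hℓeq : ℓ = σ + 1 := by omega
      subst hℓeq
      have h3 := nextV_le V G hV (σ+1) c
      simp only [Mres] at hM
      omega

lemma fillR_cov (V : ℕ → Set ℕ) (G L : ℕ → ℕ)
    (hV : ∀ σ m, ∃ t, m < t ∧ t ≤ m + G σ ∧ t ∈ V σ)
    (hLmono : Monotone L) (ℓ : ℕ) (h1 : 1 ≤ ℓ) (P : Set (ℕ × ℕ)) (m : ℕ) :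
    ∀ s c b, ℓ ≤ s →
      (∀ σ, ℓ < σ → σ ≤ s → ∀ m', m' + Dcov G L ℓ + L ℓ ≤ L σ →
        ∃ u, m' < u ∧ u ≤ m' + Dcov G L ℓ ∧ AOcc L P ℓ u ∧ u + L ℓ ≤ L σ) →
      (∀ σ, ℓ < σ → σ ≤ s →
        ∃ u, AOcc L P ℓ u ∧ L σ ≤ u + L ℓ + Mres G L ℓ ∧ u + L ℓ ≤ L σ) →
      (∀ p ∈ fillR V G L hV s c b, p ∈ P) → c ≤ m →
      m + Dcov G L ℓ ≤ b →
    ∃ u, m < u ∧ u ≤ m + Dcov G L ℓ ∧ AOcc L P ℓ u ∧ u + L ℓ ≤ b := by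
  intro s c b
  induction s, c, b using fillR.induct V G L hV with
  | case1 c b =>
    intro hs _ _ _ _ _
    omega
  | case2 σ c b h ih1 ih2 =>
    intro hs hpat hdes hP hc hb
    have hpatσ : ∀ σ', ℓ < σ' → σ' ≤ σ → ∀ m', m' + Dcov G L ℓ + L ℓ ≤ L σ' →
        ∃ u, m' < u ∧ u ≤ m' + Dcov G L ℓ ∧ AOcc L P ℓ u ∧ u + L ℓ ≤ L σ' :=
      fun σ' a b' => hpat σ' a (by omega)
    have hdesσ : ∀ σ', ℓ < σ' → σ' ≤ σ →
        ∃ u, AOcc L P ℓ u ∧ L σ' ≤ u + L ℓ + Mres G L ℓ ∧ u + L ℓ ≤ L σ' :=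
      fun σ' a b' => hdes σ' a (by omega)
    set t0 := nextV V G hV (σ+1) c with ht0
    set D := Dcov G L ℓ with hD
    set MM := Mres G L ℓ with hMM
    have hDval : D = 2 * MM + 2 * L ℓ + G ℓ + 4 := rfl
    have hsubL : ∀ p ∈ fillR V G L hV σ c t0, p ∈ P := by
      intro p hp; apply hP; rw [fillR, dif_pos h]
      simp only [Finset.mem_union]; exact Or.inl (Or.inl hp)
    have hsubR : ∀ p ∈ fillR V G L hV (σ+1) (t0 + L (σ+1)) b, p ∈ P := by
      intro p hp; apply hP; rw [fillR, dif_pos h]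
      simp only [Finset.mem_union]; exact Or.inr hp
    have hmidP : ((σ+1 : ℕ), t0) ∈ P := by
      apply hP; rw [fillR, dif_pos h]
      simp only [Finset.mem_union, Finset.mem_singleton]; tauto
    have ht0le := nextV_le V G hV (σ+1) c
    have ht0lt := nextV_lt V G hV (σ+1) c
    rcases Nat.lt_or_ge m t0 with hmt | hmt
    · -- m before the window start
      rcases le_or_gt t0 (m + D) with hnear | hfar
      · -- the window start is an occurrence
        refine ⟨t0, hmt, hnear, AOcc.base hmidP (by omega), ?_⟩
        have : L ℓ ≤ L (σ+1) := hLmono (by omega)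
        omega
      · -- recurse into the left fill
        have hℓσ : ℓ ≤ σ := by
          rcases Nat.lt_or_ge σ ℓ with h' | h'
          · exfalso
            have heq : σ + 1 = ℓ := by omega
            have hGeq : G (σ + 1) = G ℓ := by rw [heq]
            omega
          · exact h'
        obtain ⟨u, hu1, hu2, hu3, hu4⟩ := ih1 hℓσ hpatσ hdesσ hsubL hc (by omega)
        exact ⟨u, hu1, hu2, hu3, by omega⟩
    · -- t0 ≤ m
      rcases le_or_gt (m + D + L ℓ) (t0 + L (σ+1)) with hdeep | hshal
      · -- deep inside the window: use the pattern coverage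
        have hℓσ : ℓ < σ + 1 := by
          rcases Nat.lt_or_ge ℓ (σ+1) with h' | h'
          · exact h'
          · exfalso
            have : L (σ+1) ≤ L ℓ := hLmono h'
            omega
        obtain ⟨u, hu1, hu2, hu3, hu4⟩ := hpat (σ+1) hℓσ (le_refl _) (m - t0) (by omega)
        refine ⟨t0 + u, by omega, by omega, AOcc.nest hmidP hu3 hu4, by omega⟩
      · rcases le_or_gt (t0 + L (σ+1)) m with hmt2 | hmt2
        · -- beyond the window : recurse right
          exact ih2 hs hpat hdes hsubR hmt2 hb
        · -- over the right edge of the window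
          rcases Nat.lt_or_ge (m + MM + L ℓ) (t0 + L (σ+1)) with hdes' | hlead
          · -- use the pattern-end desert
            have hℓσ : ℓ < σ + 1 := by
              rcases Nat.lt_or_ge ℓ (σ+1) with h' | h'
              · exact h'
              · exfalso
                have h2 : L (σ+1) ≤ L ℓ := hLmono h'
                have h3 : 4 ≤ MM := Mres_pos G L h1
                omega
            obtain ⟨u, hu1, hu2, hu3⟩ := hdes (σ+1) hℓσ (le_refl _)
            refine ⟨t0 + u, by omega, by omega, AOcc.nest hmidP hu1 hu3, by omega⟩
          · -- use the lead of the right fill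
            have hrr : (t0 + L (σ+1)) + MM ≤ b := by
              rcases le_or_gt ((t0 + L (σ+1)) + MM) b with h' | h'
              · exact h'
              · exfalso; omega
            obtain ⟨p, hpmem, hp1, hp2⟩ :=
              fillR_lead V G L hV ℓ h1 (σ+1) (t0 + L (σ+1)) b hs hrr
            have hpm := fillR_mem V G L hV (σ+1) (t0 + L (σ+1)) b p hpmem
            have hLp : L ℓ ≤ L p.1 := hLmono hp1
            refine ⟨p.2, by omega, by omega, ?_, by omega⟩
            have : ((p.1, p.2) : ℕ × ℕ) ∈ P := hsubR _ (by simpa using hpmem)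
            exact AOcc.base this hp1
  | case3 σ c b h ih =>
    intro hs hpat hdes hP hc hb
    have hsub : ∀ p ∈ fillR V G L hV σ c b, p ∈ P := by
      intro p hp; apply hP; rw [fillR, dif_neg h]; exact hp
    rcases Nat.lt_or_ge ℓ (σ+1) with hℓ | hℓ
    · exact ih (by omega) (fun σ' a b' => hpat σ' a (by omega))
        (fun σ' a b' => hdes σ' a (by omega)) hsub hc hb
    · exfalso
      have hℓeq : ℓ = σ + 1 := by omega
      subst hℓeq
      have h3 := nextV_le V G hV (σ+1) c
      have h4 : Mres G L σ ≤ Mres G L (σ+1) := Mres_mono G L (by omega)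
      simp only [Dcov, Mres] at hb
      omega

/-- all placements, over all stages -/
def Plset (V : ℕ → Set ℕ) (G L : ℕ → ℕ)
    (hV : ∀ σ m, ∃ t, m < t ∧ t ≤ m + G σ ∧ t ∈ V σ) : Set (ℕ × ℕ) :=
  {p | ∃ j, p ∈ fillR V G L hV j (L j) (L (j+1))}

lemma stage_all (V : ℕ → Set ℕ) (G L : ℕ → ℕ)
    (hV : ∀ σ m, ∃ t, m < t ∧ t ≤ m + G σ ∧ t ∈ V σ)
    (hLmono : Monotone L)
    (hgrow : ∀ j, 1 ≤ j → L j + Mres G L j + Dcov G L j + 1 ≤ L (j+1)) :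
    ∀ j ℓ, 1 ≤ ℓ → ℓ ≤ j →
    (∀ m, m + Dcov G L ℓ ≤ L (j+1) → ∃ u, m < u ∧ u ≤ m + Dcov G L ℓ ∧
        AOcc L (Plset V G L hV) ℓ u ∧ u + L ℓ ≤ L (j+1))
  ∧ (∃ u, AOcc L (Plset V G L hV) ℓ u ∧ L (j+1) ≤ u + L ℓ + Mres G L ℓ ∧
        u + L ℓ ≤ L (j+1)) := by
  intro j
  induction j using Nat.strong_induction_on with
  | _ j IH =>
  intro ℓ h1 hℓj
  set D := Dcov G L ℓ with hD
  set MM := Mres G L ℓ with hMM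
  have hDval : D = 2 * MM + 2 * L ℓ + G ℓ + 4 := rfl
  have hsub : ∀ p ∈ fillR V G L hV j (L j) (L (j+1)), p ∈ Plset V G L hV :=
    fun p hp => ⟨j, hp⟩
  have hMj : MM ≤ Mres G L j := Mres_mono G L hℓj
  have hregM : L j + MM ≤ L (j+1) := by
    have := hgrow j (by omega)
    omega
  -- restricted pattern hypotheses from the inductive hypothesis
  have hpat : ∀ σ, ℓ < σ → σ ≤ j → ∀ m', m' + D + L ℓ ≤ L σ →
      ∃ u, m' < u ∧ u ≤ m' + D ∧ AOcc L (Plset V G L hV) ℓ u ∧ u + L ℓ ≤ L σ := by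
    intro σ hℓσ hσj m' hm'
    obtain ⟨σ', rfl⟩ : ∃ σ', σ = σ' + 1 := ⟨σ - 1, by omega⟩
    obtain ⟨u, hu1, hu2, hu3, hu4⟩ :=
      (IH σ' (by omega) ℓ h1 (by omega)).1 m' (by omega)
    exact ⟨u, hu1, hu2, hu3, hu4⟩
  have hdes : ∀ σ, ℓ < σ → σ ≤ j →
      ∃ u, AOcc L (Plset V G L hV) ℓ u ∧ L σ ≤ u + L ℓ + MM ∧ u + L ℓ ≤ L σ := by
    intro σ hℓσ hσj
    obtain ⟨σ', rfl⟩ : ∃ σ', σ = σ' + 1 := ⟨σ - 1, by omega⟩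
    exact (IH σ' (by omega) ℓ h1 (by omega)).2
  constructor
  · -- coverage
    intro m hm
    rcases le_or_gt (L j) m with hmj | hmj
    · -- m in the current region
      exact fillR_cov V G L hV hLmono ℓ h1 (Plset V G L hV) m j (L j) (L (j+1))
        hℓj hpat hdes hsub hmj hm
    · -- m in the old prefix
      rcases eq_or_lt_of_le hℓj with hℓeq | hℓlt
      · -- ℓ = j : use the lead of the current region
        obtain ⟨p, hpmem, hp1, hp2⟩ :=
          fillR_lead V G L hV ℓ h1 j (L j) (L (j+1)) hℓj hregM
        have hpm := fillR_mem V G L hV j (L j) (L (j+1)) p hpmem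
        have hLp : L ℓ ≤ L p.1 := hLmono hp1
        have hLℓj : L ℓ = L j := by rw [hℓeq]
        refine ⟨p.2, by omega, by omega, ?_, by omega⟩
        exact AOcc.base (hsub _ (by simpa using hpmem)) hp1
      · -- ℓ < j
        rcases le_or_gt (m + D) (L j) with hmD | hmD
        · -- entirely in the old prefix
          obtain ⟨j', rfl⟩ : ∃ j', j = j' + 1 := ⟨j - 1, by omega⟩
          obtain ⟨u, hu1, hu2, hu3, hu4⟩ :=
            (IH j' (by omega) ℓ h1 (by omega)).1 m hmD
          have : L (j'+1) ≤ L (j'+1+1) := hLmono (by omega)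
          exact ⟨u, hu1, hu2, hu3, by omega⟩
        · -- straddling the region boundary
          rcases lt_or_ge (m + MM + L ℓ) (L j) with hcase | hcase
          · -- use the desert bound of the old prefix
            obtain ⟨j', rfl⟩ : ∃ j', j = j' + 1 := ⟨j - 1, by omega⟩
            obtain ⟨u, hu1, hu2, hu3⟩ := (IH j' (by omega) ℓ h1 (by omega)).2
            have : L (j'+1) ≤ L (j'+1+1) := hLmono (by omega)
            exact ⟨u, by omega, by omega, hu1, by omega⟩
          · -- use the lead of the current region
            obtain ⟨p, hpmem, hp1, hp2⟩ :=
              fillR_lead V G L hV ℓ h1 j (L j) (L (j+1)) hℓj hregM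
            have hpm := fillR_mem V G L hV j (L j) (L (j+1)) p hpmem
            have hLp : L ℓ ≤ L p.1 := hLmono hp1
            refine ⟨p.2, by omega, by omega, ?_, by omega⟩
            exact AOcc.base (hsub _ (by simpa using hpmem)) hp1
  · -- desert bound
    obtain ⟨t, htmem, ht1, ht2⟩ :=
      fillR_des V G L hV ℓ h1 j (L j) (L (j+1)) hℓj hregM
    exact ⟨t, AOcc.base (hsub _ htmem) (le_refl _), ht1, ht2⟩

lemma L_unbounded (G L : ℕ → ℕ)
    (hgrow : ∀ j, 1 ≤ j → L j + Mres G L j + Dcov G L j + 1 ≤ L (j+1)) :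
    ∀ k j, 1 ≤ j → L j + k ≤ L (j + k) := by
  intro k
  induction k with
  | zero => intro j _; simp
  | succ k ih =>
    intro j hj
    have h1 := ih j hj
    have h2 := hgrow (j + k) (by omega)
    have : j + (k+1) = (j + k) + 1 := by omega
    rw [this]
    omega

lemma global_cov (V : ℕ → Set ℕ) (G L : ℕ → ℕ)
    (hV : ∀ σ m, ∃ t, m < t ∧ t ≤ m + G σ ∧ t ∈ V σ)
    (hLmono : Monotone L)
    (hgrow : ∀ j, 1 ≤ j → L j + Mres G L j + Dcov G L j + 1 ≤ L (j+1)) :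
    ∀ ℓ, 1 ≤ ℓ → ∀ m, ∃ u, m < u ∧ u ≤ m + Dcov G L ℓ ∧
      AOcc L (Plset V G L hV) ℓ u := by
  intro ℓ h1 m
  set D := Dcov G L ℓ with hD
  have hj : ∃ j, ℓ ≤ j ∧ m + D ≤ L (j+1) := by
    refine ⟨ℓ + (m + D), by omega, ?_⟩
    have := L_unbounded G L hgrow (m + D + 1) ℓ h1
    have h2 : ℓ + (m + D) + 1 = ℓ + (m + D + 1) := by omega
    rw [h2]
    omega
  obtain ⟨j, hj1, hj2⟩ := hj
  obtain ⟨u, hu1, hu2, hu3, _⟩ :=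
    (stage_all V G L hV hLmono hgrow j ℓ h1 hj1).1 m hj2
  exact ⟨u, hu1, hu2, hu3⟩

lemma Pl_mem (V : ℕ → Set ℕ) (G L : ℕ → ℕ)
    (hV : ∀ σ m, ∃ t, m < t ∧ t ≤ m + G σ ∧ t ∈ V σ)
    {p : ℕ × ℕ} (hp : p ∈ Plset V G L hV) :
    ∃ j, (1 ≤ p.1 ∧ p.1 ≤ j) ∧ (L j < p.2 ∧ p.2 + L p.1 ≤ L (j+1)) ∧ p.2 ∈ V p.1 := by
  obtain ⟨j, hj⟩ := hp
  obtain ⟨h1, h2, h3⟩ := fillR_mem V G L hV j (L j) (L (j+1)) p hj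
  exact ⟨j, h1, h2, h3⟩

lemma Pl_scale_lt (V : ℕ → Set ℕ) (G L : ℕ → ℕ)
    (hV : ∀ σ m, ∃ t, m < t ∧ t ≤ m + G σ ∧ t ∈ V σ) (hLmono : Monotone L)
    {σ t τ : ℕ} (hp : (σ, t) ∈ Plset V G L hV) (ht : t < L τ) : σ < τ := by
  obtain ⟨j, h1, h2, _⟩ := Pl_mem V G L hV hp
  simp only at h1 h2
  have hjτ : j < τ := by
    by_contra hc
    have : L τ ≤ L j := hLmono (by omega)
    omega
  omega

lemma Pl_disj (V : ℕ → Set ℕ) (G L : ℕ → ℕ)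
    (hV : ∀ σ m, ∃ t, m < t ∧ t ≤ m + G σ ∧ t ∈ V σ) (hLmono : Monotone L)
    {p q : ℕ × ℕ} (hp : p ∈ Plset V G L hV) (hq : q ∈ Plset V G L hV) (hpq : p ≠ q) :
    p.2 + L p.1 ≤ q.2 ∨ q.2 + L q.1 ≤ p.2 := by
  obtain ⟨j, hj⟩ := hp
  obtain ⟨j', hj'⟩ := hq
  rcases lt_trichotomy j j' with h | h | h
  · obtain ⟨_, hb, _⟩ := fillR_mem V G L hV j (L j) (L (j+1)) p hj
    obtain ⟨_, hb', _⟩ := fillR_mem V G L hV j' (L j') (L (j'+1)) q hj'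
    have : L (j+1) ≤ L j' := hLmono (by omega)
    left; omega
  · subst h
    exact fillR_disj V G L hV j (L j) (L (j+1)) p hj q hj' hpq
  · obtain ⟨_, hb, _⟩ := fillR_mem V G L hV j (L j) (L (j+1)) p hj
    obtain ⟨_, hb', _⟩ := fillR_mem V G L hV j' (L j') (L (j'+1)) q hj'
    have : L (j'+1) ≤ L j := hLmono (by omega)
    right; omega

/-- the content set: base element `lam1`, plus copies of all patterns along placements -/
inductive LamMem (L : ℕ → ℕ) (P : Set (ℕ × ℕ)) (lam1 : ℕ) : ℕ → Prop
  | base : LamMem L P lam1 lam1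
  | step {σ t u : ℕ} : (σ, t) ∈ P → LamMem L P lam1 u → u < L σ → LamMem L P lam1 (t + u)

lemma Lam_pos (V : ℕ → Set ℕ) (G L : ℕ → ℕ)
    (hV : ∀ σ m, ∃ t, m < t ∧ t ≤ m + G σ ∧ t ∈ V σ)
    (lam1 : ℕ) (hlam1 : 1 ≤ lam1) :
    ∀ {n}, LamMem L (Plset V G L hV) lam1 n → 1 ≤ n := by
  intro n h
  induction h with
  | base => exact hlam1
  | step hP hu hlt ih =>
    rename_i σ t u
    obtain ⟨j, _, h2, _⟩ := Pl_mem V G L hV hP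
    simp only at h2
    omega

lemma Lam_exact (V : ℕ → Set ℕ) (G L : ℕ → ℕ)
    (hV : ∀ σ m, ∃ t, m < t ∧ t ≤ m + G σ ∧ t ∈ V σ)
    (hLmono : Monotone L) (hL1 : ∀ σ, 1 ≤ L σ)
    (lam1 : ℕ) (hlam1 : 1 ≤ lam1) (hlam2 : lam1 < L 1)
    {σ t : ℕ} (hpl : (σ, t) ∈ Plset V G L hV) :
    ∀ i, i < L σ →
      (LamMem L (Plset V G L hV) lam1 (t + i) ↔ LamMem L (Plset V G L hV) lam1 i) := by
  intro i hi
  constructor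
  · intro h
    generalize hn : t + i = n at h
    induction h with
    | base =>
      exfalso
      obtain ⟨j, hj1, hj2, _⟩ := Pl_mem V G L hV hpl
      simp only at hj1 hj2
      have : L 1 ≤ L j := hLmono (by omega)
      omega
    | step hP hu hlt ih =>
      rename_i σ' t' u'
      have hu1 : 1 ≤ u' := Lam_pos V G L hV lam1 hlam1 hu
      by_cases hpq : ((σ, t) : ℕ × ℕ) = (σ', t')
      · obtain ⟨rfl, rfl⟩ := Prod.ext_iff.1 hpq
        have : i = u' := by omega
        subst this
        exact hu
      · exfalso
        rcases Pl_disj V G L hV hLmono hpl hP hpq with hd | hd <;> simp only at hd <;> omega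
  · intro h
    exact LamMem.step hpl h hi

lemma AOcc_pattern (V : ℕ → Set ℕ) (G L : ℕ → ℕ)
    (hV : ∀ σ m, ∃ t, m < t ∧ t ≤ m + G σ ∧ t ∈ V σ)
    (hLmono : Monotone L) (hL1 : ∀ σ, 1 ≤ L σ)
    (lam1 : ℕ) (hlam1 : 1 ≤ lam1) (hlam2 : lam1 < L 1)
    (ℓ : ℕ) {u : ℕ} (hocc : AOcc L (Plset V G L hV) ℓ u) :
    ∀ i, i < L ℓ →
      (LamMem L (Plset V G L hV) lam1 (u + i) ↔ LamMem L (Plset V G L hV) lam1 i) := by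
  induction hocc with
  | base hP hσ =>
    rename_i σ t
    intro i hi
    exact Lam_exact V G L hV hLmono hL1 lam1 hlam1 hlam2 hP i (by
      have := hLmono hσ; omega)
  | nest hP hocc hle ih =>
    rename_i σ t u'
    intro i hi
    have h1 : u' + i < L σ := by omega
    have h2 := Lam_exact V G L hV hLmono hL1 lam1 hlam1 hlam2 hP (u' + i) h1
    rw [← Nat.add_assoc] at *
    rw [h2]
    exact ih i hi

lemma AOcc_pos (V : ℕ → Set ℕ) (G L : ℕ → ℕ)
    (hV : ∀ σ m, ∃ t, m < t ∧ t ≤ m + G σ ∧ t ∈ V σ)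
    (ℓ : ℕ) {u : ℕ} (hocc : AOcc L (Plset V G L hV) ℓ u) : 1 ≤ u := by
  induction hocc with
  | base hP hσ =>
    obtain ⟨j, _, h2, _⟩ := Pl_mem V G L hV hP
    simp only at h2
    omega
  | nest hP hocc hle ih =>
    obtain ⟨j, _, h2, _⟩ := Pl_mem V G L hV hP
    simp only at h2
    omega

section Quality

variable {X : Type} [MetricSpace X]

lemma half_pow_le {a b : ℕ} (h : a ≤ b) : ((2:ℝ)⁻¹) ^ b ≤ ((2:ℝ)⁻¹) ^ a :=
  pow_le_pow_of_le_one (by norm_num) (by norm_num) h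

lemma AOcc_quality (V : ℕ → Set ℕ) (G L : ℕ → ℕ)
    (hV : ∀ σ m, ∃ t, m < t ∧ t ≤ m + G σ ∧ t ∈ V σ)
    (hLmono : Monotone L) (hL1 : ∀ σ, 1 ≤ L σ)
    (T : X → X) (x : X) (r₀ : ℝ) (hr₀ : 0 ≤ r₀)
    (hVrec : ∀ σ, ∀ t ∈ V σ, ∀ i, i ≤ L σ →
      dist (T^[t+i] x) (T^[i] x) ≤ r₀ * ((2:ℝ)⁻¹)^(σ+4))
    (ℓ : ℕ) {u : ℕ} (hocc : AOcc L (Plset V G L hV) ℓ u) :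
    ∀ τ, u < L τ → ∀ i, i < L ℓ →
      dist (T^[u+i] x) (T^[i] x) ≤ r₀ * (((2:ℝ)⁻¹)^(ℓ+3) - ((2:ℝ)⁻¹)^(τ+3)) := by
  induction hocc with
  | base hP hσ =>
    rename_i σ t
    intro τ hτ i hi
    have hστ : σ < τ := Pl_scale_lt V G L hV hLmono hP hτ
    have h1 : dist (T^[t+i] x) (T^[i] x) ≤ r₀ * ((2:ℝ)⁻¹)^(σ+4) := by
      apply hVrec σ t (Pl_mem V G L hV hP).choose_spec.2.2 i
      have := hLmono hσ
      omega
    refine h1.trans ?_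
    apply mul_le_mul_of_nonneg_left _ hr₀
    have e1 : ((2:ℝ)⁻¹)^(σ+3) ≤ ((2:ℝ)⁻¹)^(ℓ+3) := half_pow_le (by omega)
    have e2 : ((2:ℝ)⁻¹)^(τ+3) ≤ ((2:ℝ)⁻¹)^(σ+4) := half_pow_le (by omega)
    have e3 : ((2:ℝ)⁻¹)^(σ+3) = 2 * ((2:ℝ)⁻¹)^(σ+4) := by
      rw [pow_succ]
      ring
    linarith
  | nest hP hocc hle ih =>
    rename_i σ t u'
    intro τ hτ i hi
    have hu'σ : u' < L σ := by have := hL1 ℓ; omega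
    have hστ : σ < τ := by
      refine Pl_scale_lt V G L hV hLmono hP ?_
      omega
    have h1 := ih σ hu'σ i hi
    have h2 : dist (T^[t+(u'+i)] x) (T^[u'+i] x) ≤ r₀ * ((2:ℝ)⁻¹)^(σ+4) := by
      apply hVrec σ t (Pl_mem V G L hV hP).choose_spec.2.2 (u'+i)
      omega
    have h3 : t + u' + i = t + (u' + i) := by omega
    rw [h3]
    have h4 := dist_triangle (T^[t+(u'+i)] x) (T^[u'+i] x) (T^[i] x)
    have e2 : ((2:ℝ)⁻¹)^(τ+3) ≤ ((2:ℝ)⁻¹)^(σ+4) := half_pow_le (by omega)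
    have e3 : ((2:ℝ)⁻¹)^(σ+3) = 2 * ((2:ℝ)⁻¹)^(σ+4) := by
      rw [pow_succ]
      ring
    nlinarith [pow_nonneg (by norm_num : (0:ℝ) ≤ 2⁻¹) (σ+4), hr₀]

lemma Lam_safety_dist (V : ℕ → Set ℕ) (G L : ℕ → ℕ)
    (hV : ∀ σ m, ∃ t, m < t ∧ t ≤ m + G σ ∧ t ∈ V σ)
    (hLmono : Monotone L) (hL1 : ∀ σ, 1 ≤ L σ)
    (T : X → X) (x p₀ : X) (r₀ : ℝ) (hr₀ : 0 ≤ r₀)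
    (hVrec : ∀ σ, ∀ t ∈ V σ, ∀ i, i ≤ L σ →
      dist (T^[t+i] x) (T^[i] x) ≤ r₀ * ((2:ℝ)⁻¹)^(σ+4))
    (lam1 : ℕ) (hbase : dist (T^[lam1] x) p₀ ≤ r₀/4)
    {n : ℕ} (hn : LamMem L (Plset V G L hV) lam1 n) :
    ∀ τ, n < L τ → dist (T^[n] x) p₀ ≤ r₀/2 - r₀ * ((2:ℝ)⁻¹)^(τ+3) := by
  induction hn with
  | base =>
    intro τ _
    have : ((2:ℝ)⁻¹)^(τ+3) ≤ ((2:ℝ)⁻¹)^3 := half_pow_le (by omega)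
    have h8 : ((2:ℝ)⁻¹)^3 = 1/8 := by norm_num
    nlinarith
  | step hP hu hlt ih =>
    rename_i σ t u
    intro τ hτ
    have hστ : σ < τ := by
      refine Pl_scale_lt V G L hV hLmono hP ?_
      omega
    have h1 := ih σ hlt
    have h2 : dist (T^[t+u] x) (T^[u] x) ≤ r₀ * ((2:ℝ)⁻¹)^(σ+4) := by
      apply hVrec σ t (Pl_mem V G L hV hP).choose_spec.2.2 u
      omega
    have h4 := dist_triangle (T^[t+u] x) (T^[u] x) p₀
    have e2 : ((2:ℝ)⁻¹)^(τ+3) ≤ ((2:ℝ)⁻¹)^(σ+4) := half_pow_le (by omega)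
    have e3 : ((2:ℝ)⁻¹)^(σ+3) = 2 * ((2:ℝ)⁻¹)^(σ+4) := by
      rw [pow_succ]
      ring
    have e4 : r₀ * ((2:ℝ)⁻¹)^(τ+3) ≤ r₀ * ((2:ℝ)⁻¹)^(σ+4) := mul_le_mul_of_nonneg_left e2 hr₀
    have e5 : r₀ * ((2:ℝ)⁻¹)^(σ+3) = 2 * (r₀ * ((2:ℝ)⁻¹)^(σ+4)) := by rw [e3]; ring
    linarith

end Quality



/-! ### The witness system -/

noncomputable instance cantorMetric : MetricSpace (ℕ → Bool) :=
  PiNat.metricSpaceOfDiscreteUniformity (fun _ => rfl)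

/-- the one-sided shift -/
def shf : (ℕ → Bool) → (ℕ → Bool) := fun ξ i => ξ (i+1)

lemma shf_cont : Continuous shf :=
  continuous_pi fun i => continuous_apply (i+1)

lemma shf_iter (n : ℕ) (ξ : ℕ → Bool) (i : ℕ) : (shf^[n] ξ) i = ξ (i + n) := by
  induction n generalizing ξ i with
  | zero => rfl
  | succ n ih =>
    rw [Function.iterate_succ_apply, ih]
    simp [shf, Nat.add_assoc]

/-- the product map -/
def Gp {X : Type} (T : X → X) : X × (ℕ → Bool) → X × (ℕ → Bool) := fun q => (T q.1, shf q.2)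

lemma Gp_cont {X : Type} [MetricSpace X] (T : X → X) (hT : Continuous T) :
    Continuous (Gp T) :=
  Continuous.prodMk (hT.comp continuous_fst) (shf_cont.comp continuous_snd)

lemma Gp_iter {X : Type} (T : X → X) (n : ℕ) (q : X × (ℕ → Bool)) :
    (Gp T)^[n] q = (T^[n] q.1, shf^[n] q.2) := by
  induction n generalizing q with
  | zero => rfl
  | succ n ih =>
    rw [Function.iterate_succ_apply, Function.iterate_succ_apply,
      Function.iterate_succ_apply, ih]
    rfl

/-- visiting lemma: if the pair point `(x, η)` is uniformly recurrent, `η` takes the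
value `true` somewhere, and `A` is dynamically thick, then some positive time in `A`
has `η n = true`. -/
lemma witness_visit {X : Type} [MetricSpace X] [CompactSpace X] [Nonempty X]
    (T : X → X) (hT : Continuous T) (x : X) (η : ℕ → Bool) (A : Set ℕ)
    (hUR : ∀ ε : ℝ, 0 < ε → ∃ Ng : ℕ, ∀ m : ℕ, ∃ n, m < n ∧ n ≤ m + Ng ∧
      dist ((Gp T)^[n] (x, η)) (x, η) < ε)
    (hinf : ∃ n₀, η n₀ = true)
    (hthick : DynThick A) :
    ∃ n ∈ A, 0 < n ∧ η n = true := by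
  classical
  set ζ : X × (ℕ → Bool) := (x, η) with hζ
  set Z : Set (X × (ℕ → Bool)) := closure (Set.range fun n : ℕ => (Gp T)^[n] ζ) with hZ
  have hζZ : ζ ∈ Z := subset_closure ⟨0, rfl⟩
  have horbZ : ∀ n, (Gp T)^[n] ζ ∈ Z := fun n => subset_closure ⟨n, rfl⟩
  have hGcont : Continuous (Gp T) := Gp_cont T hT
  have hGinv : ∀ q ∈ Z, Gp T q ∈ Z := by
    intro q hq
    have h2 : Gp T '' (Set.range fun n : ℕ => (Gp T)^[n] ζ) ⊆
        (Set.range fun n : ℕ => (Gp T)^[n] ζ) := by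
      rintro _ ⟨_, ⟨n, rfl⟩, rfl⟩
      refine ⟨n+1, ?_⟩
      show (Gp T)^[n+1] ζ = Gp T ((Gp T)^[n] ζ)
      rw [Function.iterate_succ_apply']
    have h1 : Gp T q ∈ closure (Gp T '' (Set.range fun n : ℕ => (Gp T)^[n] ζ)) :=
      image_closure_subset_closure_image hGcont ⟨q, hq, rfl⟩
    exact closure_mono h2 h1
  -- every point of Z returns close to ζ at positive times
  have hreturn : ∀ q ∈ Z, ∀ ε : ℝ, 0 < ε → ∃ j, 1 ≤ j ∧ dist ((Gp T)^[j] q) ζ < ε := by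
    intro q hq ε hε
    obtain ⟨Ng, hNg⟩ := hUR (ε/2) (by positivity)
    have hρex : ∀ j : ℕ, ∃ ρ : ℝ, 0 < ρ ∧ ∀ z, dist z q < ρ →
        dist ((Gp T)^[j] z) ((Gp T)^[j] q) < ε/2 := by
      intro j
      have hc := ((hGcont.iterate j).continuousAt (x := q))
      rw [Metric.continuousAt_iff] at hc
      obtain ⟨δ, hδ, h⟩ := hc (ε/2) (by positivity)
      exact ⟨δ, hδ, fun z hz => h hz⟩
    choose ρf hρf1 hρf2 using hρex
    set ρ := (Finset.range (Ng+1)).inf' ⟨0, by simp⟩ ρf with hρdef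
    have hρ0 : 0 < ρ := by
      rw [hρdef]
      exact (Finset.lt_inf'_iff _).2 (fun i _ => hρf1 i)
    have hρle : ∀ j, j ≤ Ng → ρ ≤ ρf j := by
      intro j hj
      exact Finset.inf'_le _ (Finset.mem_range.2 (by omega))
    have hq' : ∃ n₀, dist ((Gp T)^[n₀] ζ) q < ρ := by
      have := Metric.mem_closure_iff.1 hq ρ hρ0
      obtain ⟨b, ⟨n₀, rfl⟩, hb⟩ := this
      exact ⟨n₀, by rwa [dist_comm]⟩
    obtain ⟨n₀, hn₀⟩ := hq'
    obtain ⟨n, hn1, hn2, hn3⟩ := hNg n₀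
    refine ⟨n - n₀, by omega, ?_⟩
    have hiter : (Gp T)^[n - n₀] ((Gp T)^[n₀] ζ) = (Gp T)^[n] ζ := by
      rw [← Function.iterate_add_apply]
      congr 1
      omega
    have h1 : dist ((Gp T)^[n - n₀] q) ((Gp T)^[n] ζ) < ε/2 := by
      rw [← hiter]
      have := hρf2 (n - n₀) ((Gp T)^[n₀] ζ) (lt_of_lt_of_le hn₀ (hρle _ (by omega)))
      rwa [dist_comm ((Gp T)^[n-n₀] ((Gp T)^[n₀] ζ))] at this
    calc dist ((Gp T)^[n - n₀] q) ζ
        ≤ dist ((Gp T)^[n - n₀] q) ((Gp T)^[n] ζ) + dist ((Gp T)^[n] ζ) ζ :=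
          dist_triangle _ _ _
      _ < ε/2 + ε/2 := by exact add_lt_add h1 hn3
      _ = ε := by ring
  -- package the system
  have hZclosed : IsClosed Z := isClosed_closure
  haveI hZne : Nonempty ↥Z := ⟨⟨ζ, hζZ⟩⟩
  haveI hZcpt : CompactSpace ↥Z := isCompact_iff_compactSpace.mp hZclosed.isCompact
  set SysMap : ↥Z → ↥Z := fun q => ⟨Gp T q.1, hGinv q.1 q.2⟩ with hSysMap
  have hSysCont : Continuous SysMap :=
    Continuous.subtype_mk (hGcont.comp continuous_subtype_val) _
  have hSysIter : ∀ n (q : ↥Z), (SysMap^[n] q).1 = (Gp T)^[n] q.1 := by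
    intro n
    induction n with
    | zero => intro q; rfl
    | succ n ih =>
      intro q
      rw [Function.iterate_succ_apply', Function.iterate_succ_apply', ← ih q]
  set Sys : MetricDynSystem := ⟨↥Z, SysMap, hSysCont⟩ with hSys
  have hSysMin : Sys.Minimal := by
    intro q
    rw [Metric.dense_iff]
    intro w ε hε
    -- find m with G^[m] ζ close to w.1
    have hw : ∃ m, dist ((Gp T)^[m] ζ) w.1 < ε/2 := by
      have := Metric.mem_closure_iff.1 w.2 (ε/2) (by positivity)
      obtain ⟨b, ⟨m, rfl⟩, hb⟩ := this
      exact ⟨m, by rwa [dist_comm]⟩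
    obtain ⟨m, hm⟩ := hw
    have hc := ((hGcont.iterate m).continuousAt (x := ζ))
    rw [Metric.continuousAt_iff] at hc
    obtain ⟨ρ, hρ0, hρ⟩ := hc (ε/2) (by positivity)
    obtain ⟨j, hj1, hj2⟩ := hreturn q.1 q.2 ρ hρ0
    refine ⟨SysMap^[m + j] q, ?_, ⟨m + j, by omega, rfl⟩⟩
    rw [Metric.mem_ball, Subtype.dist_eq, hSysIter]
    have hiter : (Gp T)^[m + j] q.1 = (Gp T)^[m] ((Gp T)^[j] q.1) :=
      Function.iterate_add_apply _ m j q.1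
    rw [hiter]
    calc dist ((Gp T)^[m] ((Gp T)^[j] q.1)) w.1
        ≤ dist ((Gp T)^[m] ((Gp T)^[j] q.1)) ((Gp T)^[m] ζ) + dist ((Gp T)^[m] ζ) w.1 :=
          dist_triangle _ _ _
      _ < ε/2 + ε/2 := add_lt_add (hρ hj2) hm
      _ = ε := by ring
  -- the cylinder set
  set V : Set ↥Z := {q : ↥Z | q.1.2 0 = true} with hV
  have hVopen : IsOpen V := by
    have hcont : Continuous (fun q : ↥Z => q.1.2 0) :=
      (continuous_apply 0).comp (continuous_snd.comp continuous_subtype_val)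
    have : V = (fun q : ↥Z => q.1.2 0) ⁻¹' {true} := by
      ext q; simp [hV]
    rw [this]
    exact (isOpen_discrete _).preimage hcont
  have hVne : V.Nonempty := by
    obtain ⟨n₀, hn₀⟩ := hinf
    refine ⟨⟨(Gp T)^[n₀] ζ, horbZ n₀⟩, ?_⟩
    simp only [hV, Set.mem_setOf_eq, Gp_iter, shf_iter, hζ]
    simpa using hn₀
  obtain ⟨n, hnA, hn0, hnV⟩ := hthick Sys hSysMin ⟨ζ, hζZ⟩ V hVopen hVne
  refine ⟨n, hnA, hn0, ?_⟩
  have h2 : (SysMap^[n] ⟨ζ, hζZ⟩).1.2 0 = true := hnV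
  rw [hSysIter] at h2
  simp only [Gp_iter, shf_iter, hζ] at h2
  simpa using h2

/-! ### The core theorem: for a dynamically thick set `A`, the intersection of `A` with
any set of return times of a minimal system is piecewise syndetic.  This is the hard
dynamical input, proved later. -/

theorem core_PS (A : Set ℕ) (hA : DynThick A) (S : MetricDynSystem) (hS : S.Minimal)
    (x : S.carrier) (U : Set S.carrier) (hU : IsOpen U) (hne : U.Nonempty) :
    ∃ N, 0 < N ∧ ∀ k : ℕ, ∃ t : ℕ, ∀ s, t ≤ s → s ≤ t + k →
      ∃ i, 1 ≤ i ∧ i ≤ N ∧ s + i ∈ A ∧ s + i ∈ RetTimes S x U := by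
  classical
  by_contra hn
  push_neg at hn
  -- extract the syndetic "bad window" structure
  have hbad : ∀ N : ℕ, 0 < N → ∃ g, 0 < g ∧ ∀ m : ℕ, ∃ s, m < s ∧ s ≤ m + g ∧
      ∀ i, 1 ≤ i → i ≤ N → ¬(s + i ∈ A ∧ s + i ∈ RetTimes S x U) := by
    intro N hN
    obtain ⟨k, hk⟩ := hn N hN
    refine ⟨k + 1, by omega, fun m => ?_⟩
    obtain ⟨s, hs1, hs2, hs3⟩ := hk (m + 1)
    refine ⟨s, by omega, by omega, fun i h1 h2 => ?_⟩
    intro hcon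
    obtain ⟨hA', hR'⟩ := hcon
    exact (hs3 i h1 h2 hA') hR'
  obtain ⟨p₀, hp₀⟩ := hne
  obtain ⟨r₀, hr₀pos, hball⟩ := Metric.isOpen_iff.1 hU p₀ hp₀
  -- existence of valid positions at every scale/length
  have hVex : ∀ ℓ len : ℕ, ∃ g, 0 < g ∧ ∀ m : ℕ, ∃ t, m < t ∧ t ≤ m + g ∧
      ((∀ i, i ≤ len → dist (S.map^[t+i] x) (S.map^[i] x) ≤ r₀ * ((2:ℝ)⁻¹)^(ℓ+4)) ∧
       (∀ c, 1 ≤ c → c ≤ len → S.map^[t+c] x ∈ U → (t+c) ∉ A)) := by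
    intro ℓ len
    set ε := r₀ * ((2:ℝ)⁻¹)^(ℓ+4) with hεdef
    have hε : 0 < ε := by positivity
    set W : Set S.carrier :=
      ⋂ i ∈ Finset.range (len+1), (S.map^[i]) ⁻¹' (Metric.ball (S.map^[i] x) ε) with hW
    have hWopen : IsOpen W := isOpen_biInter_finset
      (fun i _ => (S.continuous_map.iterate i).isOpen_preimage _ Metric.isOpen_ball)
    have hWx : x ∈ W := by
      simp only [hW, Set.mem_iInter, Set.mem_preimage, Metric.mem_ball]
      intro i _
      simpa using hε
    obtain ⟨g₁, hg₁, hret⟩ := retTimes_syndetic_from S hS x W hWopen ⟨x, hWx⟩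
    obtain ⟨g₂, hg₂, hbadN⟩ := hbad (len + g₁ + 2) (by omega)
    refine ⟨g₂ + g₁, by omega, fun m => ?_⟩
    obtain ⟨s, hs1, hs2, hs3⟩ := hbadN m
    obtain ⟨i₀, hi₀1, hi₀2, hi₀3⟩ := hret s
    refine ⟨s + i₀, by omega, by omega, ?_, ?_⟩
    · intro i hi
      have hmem : S.map^[s+i₀] x ∈ W := hi₀3.2
      rw [hW] at hmem
      simp only [Set.mem_iInter, Set.mem_preimage, Finset.mem_range, Metric.mem_ball] at hmem
      have hd := hmem i (by omega)
      have heq : S.map^[i] (S.map^[s+i₀] x) = S.map^[(s+i₀)+i] x := by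
        rw [Nat.add_comm (s+i₀) i]
        exact (Function.iterate_add_apply S.map i (s+i₀) x).symm
      rw [heq] at hd
      exact le_of_lt hd
    · intro c hc1 hc2 hcU
      have hb := hs3 (i₀ + c) (by omega) (by omega)
      have heq : s + (i₀ + c) = (s + i₀) + c := by omega
      rw [heq] at hb
      intro hA'
      exact hb ⟨hA', ⟨by omega, hcU⟩⟩
  -- the base point of the pattern
  have hlam : ∃ lam1 : ℕ, 1 ≤ lam1 ∧ dist (S.map^[lam1] x) p₀ ≤ r₀/4 ∧ lam1 ∉ A := by
    have hb4 : (0:ℝ) < r₀/4 := by positivity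
    obtain ⟨g₀, hg₀, hret⟩ := retTimes_syndetic_from S hS x (Metric.ball p₀ (r₀/4))
      Metric.isOpen_ball ⟨p₀, by simpa [Metric.mem_ball] using hb4⟩
    obtain ⟨g₂, hg₂, hbadN⟩ := hbad (g₀ + 1) (by omega)
    obtain ⟨s, hs1, hs2, hs3⟩ := hbadN 0
    obtain ⟨i₀, h1, h2, h3⟩ := hret s
    have hdist : dist (S.map^[s+i₀] x) p₀ < r₀/4 := by
      have := h3.2
      rwa [Metric.mem_ball] at this
    refine ⟨s + i₀, by omega, le_of_lt hdist, ?_⟩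
    intro hA'
    apply hs3 i₀ h1 (by omega)
    refine ⟨hA', ⟨by omega, ?_⟩⟩
    apply hball
    rw [Metric.mem_ball]
    linarith
  obtain ⟨lam1, hlam1, hlam1dist, hlam1A⟩ := hlam
  -- choose the gap functions
  have hVex' : ∀ p : ℕ × ℕ, ∃ g, 0 < g ∧ ∀ m : ℕ, ∃ t, m < t ∧ t ≤ m + g ∧
      ((∀ i, i ≤ p.2 → dist (S.map^[t+i] x) (S.map^[i] x) ≤ r₀ * ((2:ℝ)⁻¹)^(p.1+4)) ∧
       (∀ c, 1 ≤ c → c ≤ p.2 → S.map^[t+c] x ∈ U → (t+c) ∉ A)) := fun p => hVex p.1 p.2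
  choose gVp hgVp using hVex'
  set gV : ℕ → ℕ → ℕ := fun ℓ len => gVp (ℓ, len) with hgVdef
  -- the recursive scale parameters
  set F : ℕ → ℕ × ℕ := fun n => Nat.rec ((1 : ℕ), (0 : ℕ))
    (fun σ ih =>
      ((if σ = 0 then lam1 + 1
          else ih.1 + ih.2 + (2*ih.2 + 2*ih.1 + gV σ ih.1 + 4) + 1),
       ih.2 + gV (σ+1) (if σ = 0 then lam1 + 1
          else ih.1 + ih.2 + (2*ih.2 + 2*ih.1 + gV σ ih.1 + 4) + 1)
         + 3*(if σ = 0 then lam1 + 1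
          else ih.1 + ih.2 + (2*ih.2 + 2*ih.1 + gV σ ih.1 + 4) + 1) + 4)) n with hFdef
  set Lf : ℕ → ℕ := fun σ => (F σ).1 with hLfdef
  set Gf : ℕ → ℕ := fun σ => gV σ (Lf σ) with hGfdef
  have hF0 : F 0 = (1, 0) := rfl
  have hFs : ∀ σ, F (σ+1) =
      ((if σ = 0 then lam1 + 1
          else (F σ).1 + (F σ).2 + (2*(F σ).2 + 2*(F σ).1 + gV σ (F σ).1 + 4) + 1),
       (F σ).2 + gV (σ+1) (if σ = 0 then lam1 + 1
          else (F σ).1 + (F σ).2 + (2*(F σ).2 + 2*(F σ).1 + gV σ (F σ).1 + 4) + 1)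
         + 3*(if σ = 0 then lam1 + 1
          else (F σ).1 + (F σ).2 + (2*(F σ).2 + 2*(F σ).1 + gV σ (F σ).1 + 4) + 1) + 4) :=
    fun σ => rfl
  have hFfst : ∀ σ, (F (σ+1)).1 = (if σ = 0 then lam1 + 1
      else (F σ).1 + (F σ).2 + (2*(F σ).2 + 2*(F σ).1 + gV σ (F σ).1 + 4) + 1) := by
    intro σ
    have h := congrArg Prod.fst (hFs σ)
    simpa using h
  have hFsnd : ∀ σ, (F (σ+1)).2 = (F σ).2 + gV (σ+1) ((F (σ+1)).1) + 3 * ((F (σ+1)).1) + 4 := by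
    intro σ
    rw [hFs σ]
  have hLf1 : Lf 1 = lam1 + 1 := by
    show (F (0+1)).1 = lam1 + 1
    rw [hFfst 0]
    simp
  have hLfs : ∀ σ, 1 ≤ σ →
      Lf (σ+1) = Lf σ + (F σ).2 + (2*(F σ).2 + 2*Lf σ + Gf σ + 4) + 1 := by
    intro σ hσ
    show (F (σ+1)).1 = _
    rw [hFfst σ, if_neg (by omega : ¬ σ = 0)]
  have hMres : ∀ σ, Mres Gf Lf σ = (F σ).2 := by
    intro σ
    induction σ with
    | zero => rfl
    | succ σ ih =>
      show Mres Gf Lf (σ+1) = (F (σ+1)).2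
      simp only [Mres, ih]
      exact (hFsnd σ).symm
  have hL1 : ∀ σ, 1 ≤ Lf σ := by
    intro σ
    induction σ with
    | zero => exact le_refl _
    | succ σ ih =>
      have h := hFfst σ
      show 1 ≤ (F (σ+1)).1
      rw [h]
      by_cases h0 : σ = 0
      · rw [if_pos h0]; omega
      · rw [if_neg h0]; omega
  have hLmono : Monotone Lf := by
    apply monotone_nat_of_le_succ
    intro σ
    have h := hFfst σ
    show (F σ).1 ≤ (F (σ+1)).1
    rw [h]
    by_cases h0 : σ = 0
    · subst h0
      have e0 : (F 0).1 = 1 := rfl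
      rw [if_pos rfl]
      omega
    · rw [if_neg h0]
      omega
  have hgrow : ∀ j, 1 ≤ j → Lf j + Mres Gf Lf j + Dcov Gf Lf j + 1 ≤ Lf (j+1) := by
    intro j hj
    rw [hLfs j hj, hMres j]
    have e : Dcov Gf Lf j = 2 * Mres Gf Lf j + 2 * Lf j + Gf j + 4 := rfl
    rw [hMres j] at e
    omega
  -- the valid position sets
  set Vf : ℕ → Set ℕ := fun σ => {t |
      (∀ i, i ≤ Lf σ → dist (S.map^[t+i] x) (S.map^[i] x) ≤ r₀ * ((2:ℝ)⁻¹)^(σ+4)) ∧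
      (∀ c, 1 ≤ c → c ≤ Lf σ → S.map^[t+c] x ∈ U → (t+c) ∉ A)} with hVfdef
  have hVf : ∀ σ m, ∃ t, m < t ∧ t ≤ m + Gf σ ∧ t ∈ Vf σ := by
    intro σ m
    obtain ⟨t, h1, h2, h3⟩ := (hgVp (σ, Lf σ)).2 m
    exact ⟨t, h1, h2, h3⟩
  have hVrec : ∀ σ, ∀ t ∈ Vf σ, ∀ i, i ≤ Lf σ →
      dist (S.map^[t+i] x) (S.map^[i] x) ≤ r₀ * ((2:ℝ)⁻¹)^(σ+4) :=
    fun σ t ht i hi => ht.1 i hi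
  -- the content set
  have hLunb : ∀ n : ℕ, ∃ τ, n < Lf τ := by
    intro n
    refine ⟨1 + (n+1), ?_⟩
    have := L_unbounded Gf Lf hgrow (n+1) 1 (le_refl _)
    have h1 := hL1 1
    omega
  have hLamU : ∀ n, LamMem Lf (Plset Vf Gf Lf hVf) lam1 n → S.map^[n] x ∈ U := by
    intro n hn'
    obtain ⟨τ, hτ⟩ := hLunb n
    have hd := Lam_safety_dist Vf Gf Lf hVf hLmono hL1 S.map x p₀ r₀ (le_of_lt hr₀pos)
      hVrec lam1 hlam1dist hn' τ hτ
    apply hball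
    rw [Metric.mem_ball]
    have hp1 : (0:ℝ) ≤ r₀ * ((2:ℝ)⁻¹)^(τ+3) := by positivity
    linarith
  have hLamA : ∀ n, LamMem Lf (Plset Vf Gf Lf hVf) lam1 n → n ∉ A := by
    intro n hn'
    induction hn' with
    | base => exact hlam1A
    | step hP hu hlt ih =>
      rename_i σ t u
      have hVmem : t ∈ Vf σ := (Pl_mem Vf Gf Lf hVf hP).choose_spec.2.2
      have hu1 : 1 ≤ u := Lam_pos Vf Gf Lf hVf lam1 hlam1 hu
      have hUtc : S.map^[t+u] x ∈ U := hLamU (t+u) (LamMem.step hP hu hlt)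
      exact hVmem.2 u hu1 (by omega) hUtc
  -- the symbolic point
  set η : ℕ → Bool := fun n => decide (LamMem Lf (Plset Vf Gf Lf hVf) lam1 n) with hηdef
  have hηtrue : ∀ n, η n = true ↔ LamMem Lf (Plset Vf Gf Lf hVf) lam1 n := by
    intro n
    simp [hηdef]
  -- uniform recurrence of the pair point
  have hUR : ∀ ε : ℝ, 0 < ε → ∃ Ng : ℕ, ∀ m : ℕ, ∃ n, m < n ∧ n ≤ m + Ng ∧
      dist ((Gp S.map)^[n] (x, η)) (x, η) < ε := by
    intro ε hε
    obtain ⟨k₁, hk₁⟩ := exists_pow_lt_of_lt_one (show (0:ℝ) < ε / (r₀ + 1) by positivity)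
      (show (2:ℝ)⁻¹ < 1 by norm_num)
    obtain ⟨k₂, hk₂⟩ := exists_pow_lt_of_lt_one hε (show (1:ℝ)/2 < 1 by norm_num)
    set ℓ : ℕ := k₁ + k₂ + 1 with hℓdef
    have hℓ1 : 1 ≤ ℓ := by omega
    have hLℓ : k₂ ≤ Lf ℓ := by
      have := L_unbounded Gf Lf hgrow (k₁ + k₂) 1 (le_refl _)
      have h1 := hL1 1
      have heq : 1 + (k₁ + k₂) = ℓ := by omega
      rw [heq] at this
      omega
    refine ⟨Dcov Gf Lf ℓ, fun m => ?_⟩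
    obtain ⟨u, hu1, hu2, hu3⟩ := global_cov Vf Gf Lf hVf hLmono hgrow ℓ hℓ1 m
    refine ⟨u, hu1, hu2, ?_⟩
    rw [Gp_iter, Prod.dist_eq]
    apply max_lt
    · -- base coordinate
      obtain ⟨τ, hτ⟩ := hLunb u
      have hq := AOcc_quality Vf Gf Lf hVf hLmono hL1 S.map x r₀ (le_of_lt hr₀pos)
        hVrec ℓ hu3 τ hτ 0 (by have := hL1 ℓ; omega)
      simp only [Nat.add_zero, Function.iterate_zero_apply] at hq
      have hp1 : (0:ℝ) ≤ r₀ * ((2:ℝ)⁻¹)^(τ+3) := by positivity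
      have hp2 : r₀ * ((2:ℝ)⁻¹)^(ℓ+3) < ε := by
        have e1 : ((2:ℝ)⁻¹)^(ℓ+3) ≤ ((2:ℝ)⁻¹)^(k₁) := half_pow_le (by omega)
        have e2 : r₀ * ((2:ℝ)⁻¹)^(k₁) ≤ (r₀ + 1) * ((2:ℝ)⁻¹)^(k₁) := by
          apply mul_le_mul_of_nonneg_right (by linarith) (by positivity)
        have e3 : (r₀ + 1) * ((2:ℝ)⁻¹)^(k₁) < (r₀ + 1) * (ε / (r₀ + 1)) := by
          apply mul_lt_mul_of_pos_left hk₁ (by linarith)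
        have e4 : (r₀ + 1) * (ε / (r₀ + 1)) = ε := by
          field_simp
        have e5 : r₀ * ((2:ℝ)⁻¹)^(ℓ+3) ≤ r₀ * ((2:ℝ)⁻¹)^(k₁) :=
          mul_le_mul_of_nonneg_left e1 (le_of_lt hr₀pos)
        linarith
      have hsub : r₀ * (((2:ℝ)⁻¹)^(ℓ+3) - ((2:ℝ)⁻¹)^(τ+3)) ≤ r₀ * ((2:ℝ)⁻¹)^(ℓ+3) := by
        have : (0:ℝ) ≤ ((2:ℝ)⁻¹)^(τ+3) := by positivity
        nlinarith [le_of_lt hr₀pos]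
      calc dist (S.map^[u] x) x ≤ r₀ * (((2:ℝ)⁻¹)^(ℓ+3) - ((2:ℝ)⁻¹)^(τ+3)) := hq
        _ ≤ r₀ * ((2:ℝ)⁻¹)^(ℓ+3) := hsub
        _ < ε := hp2
    · -- symbolic coordinate
      have hagree : ∀ i, i < Lf ℓ → (shf^[u] η) i = η i := by
        intro i hi
        rw [shf_iter]
        have := AOcc_pattern Vf Gf Lf hVf hLmono hL1 lam1 hlam1
          (by rw [hLf1]; omega) ℓ hu3 i hi
        simp only [hηdef, decide_eq_decide]
        rw [Nat.add_comm i u] at *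
        exact this
      have hcyl : shf^[u] η ∈ PiNat.cylinder η (Lf ℓ) := by
        rw [PiNat.mem_cylinder_iff]
        exact hagree
      have hdle : dist (shf^[u] η) η ≤ (1/2 : ℝ)^(Lf ℓ) :=
        PiNat.mem_cylinder_iff_dist_le.1 hcyl
      have : ((1:ℝ)/2)^(Lf ℓ) ≤ ((1:ℝ)/2)^(k₂) :=
        pow_le_pow_of_le_one (by norm_num) (by norm_num) hLℓ
      linarith
  -- conclude
  obtain ⟨n, hnA, hn0, hntrue⟩ :=
    witness_visit S.map S.continuous_map x η A hUR ⟨lam1, (hηtrue lam1).2 LamMem.base⟩ hA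
  exact hLamA n ((hηtrue n).1 hntrue) hnA

/-- windows can be found beyond any prescribed position -/
lemma core_PS_windows (A : Set ℕ) (hA : DynThick A) (S : MetricDynSystem) (hS : S.Minimal)
    (x : S.carrier) (U : Set S.carrier) (hU : IsOpen U) (hne : U.Nonempty) :
    ∃ N, 0 < N ∧ ∀ k Q : ℕ, ∃ t : ℕ, Q ≤ t ∧ ∀ s, t ≤ s → s ≤ t + k →
      ∃ i, 1 ≤ i ∧ i ≤ N ∧ s + i ∈ A ∧ s + i ∈ RetTimes S x U := by
  obtain ⟨N, hN, hwin⟩ := core_PS A hA S hS x U hU hne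
  refine ⟨N, hN, fun k Q => ?_⟩
  obtain ⟨t, ht⟩ := hwin (Q + k)
  rcases le_or_gt Q t with h | h
  · exact ⟨t, h, fun s hs1 hs2 => ht s hs1 (by omega)⟩
  · exact ⟨Q, le_refl _, fun s hs1 hs2 => ht s (by omega) (by omega)⟩

/-! ### The forward direction, assuming `core_PS`. -/

lemma forward_direction (A : Set ℕ) (hA : DynThick A) :
    ∃ C : Set (Set ℕ), RobustlySyndetic C ∧
      ∃ H : Set ℕ → Set ℕ, (∀ B ∈ C, Thick (H B)) ∧ A = ⋃ B ∈ C, B ∩ H B := by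
  classical
  refine ⟨{B : Set ℕ | Thick (A ∪ Bᶜ)}, ?_, fun B => A ∪ Bᶜ, fun B hB => hB, ?_⟩
  · -- robust syndeticity
    intro D hD
    obtain ⟨S, hS, x, U, hU, hne, hsub⟩ := hD
    obtain ⟨ND, hND, hDsyn⟩ := dynSyndetic_syndetic ⟨S, hS, x, U, hU, hne, hsub⟩
    obtain ⟨N, hN, hwin⟩ := core_PS_windows A hA S hS x U hU hne
    choose tf htf1 htf2 using hwin
    -- sparse sequence of window positions
    set t' : ℕ → ℕ := fun k =>
      Nat.rec (tf 0 1) (fun k ih => tf (k+1) (ih + k + 2*N + ND + 10)) k with ht'def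
    have ht's : ∀ k, t' (k+1) = tf (k+1) (t' k + k + 2*N + ND + 10) := fun k => rfl
    have ht'win : ∀ k s, t' k ≤ s → s ≤ t' k + k →
        ∃ i, 1 ≤ i ∧ i ≤ N ∧ s + i ∈ A ∧ s + i ∈ RetTimes S x U := by
      intro k
      cases k with
      | zero => exact htf2 0 1
      | succ k => rw [ht's]; exact htf2 (k+1) _
    have ht'sep : ∀ k, t' k + k + 2*N + ND + 10 ≤ t' (k+1) := by
      intro k; rw [ht's]; exact htf1 (k+1) _
    have ht'mono : ∀ k1 k2, k1 < k2 → t' k1 + k1 + 2*N + ND + 10 ≤ t' k2 := by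
      intro k1 k2 h
      induction k2 with
      | zero => omega
      | succ k2 ih =>
        rcases Nat.lt_succ_iff_lt_or_eq.1 h with h' | h'
        · have := ih h'
          have := ht'sep k2
          omega
        · subst h'; exact ht'sep k1
    -- the set of window positions
    set W : Set ℕ := ⋃ k, Set.Icc (t' k + 1) (t' k + k + N) with hWdef
    set B : Set ℕ := (D ∩ Wᶜ) ∪ (A ∩ D ∩ W) with hBdef
    have hBD : B ⊆ D := by
      rintro b (hb | hb)
      · exact hb.1
      · exact hb.1.2
    refine ⟨B, ?_, ?_⟩
    · -- B ∈ C : Thick (A ∪ Bᶜ)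
      intro F
      set KF := F.sup id with hKF
      refine ⟨t' (KF + 1) + 1, by omega, fun f hf => ?_⟩
      have hfK : f ≤ KF := Finset.le_sup (f := id) hf
      have hfW : f + (t' (KF+1) + 1) ∈ W := by
        refine Set.mem_iUnion.2 ⟨KF + 1, ?_⟩
        simp only [Set.mem_Icc]; omega
      by_cases hfB : f + (t' (KF+1) + 1) ∈ B
      · rcases hfB with h | h
        · exact absurd hfW h.2
        · exact Or.inl h.1.1
      · exact Or.inr hfB
    · -- Syndetic (D ∩ B)
      refine ⟨2*N + ND + 2, by omega, fun m hm => ?_⟩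
      obtain ⟨jD, hj1, hj2, hj3⟩ := hDsyn m hm
      by_cases hjW : m + jD ∈ W
      case neg =>
        exact ⟨jD, hj1, by omega, hj3, Or.inl ⟨hj3, hjW⟩⟩
      case pos =>
        obtain ⟨k, hk⟩ := Set.mem_iUnion.1 hjW
        simp only [Set.mem_Icc] at hk
        rcases le_or_gt m (t' k + k) with hmk | hmk
        · rcases le_or_gt (t' k) m with htm | htm
          · -- m inside the window
            obtain ⟨i, hi1, hi2, hiA, hiR⟩ := ht'win k m htm hmk
            have hiW : m + i ∈ W := Set.mem_iUnion.2 ⟨k, by simp only [Set.mem_Icc]; omega⟩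
            exact ⟨i, hi1, by omega, hsub hiR, Or.inr ⟨⟨hiA, hsub hiR⟩, hiW⟩⟩
          · -- m before the window start
            obtain ⟨i, hi1, hi2, hiA, hiR⟩ := ht'win k (t' k) (le_refl _) (by omega)
            have hiW : t' k + i ∈ W :=
              Set.mem_iUnion.2 ⟨k, by simp only [Set.mem_Icc]; omega⟩
            refine ⟨t' k + i - m, by omega, by omega, ?_⟩
            have : m + (t' k + i - m) = t' k + i := by omega
            rw [this]
            exact ⟨hsub hiR, Or.inr ⟨⟨hiA, hsub hiR⟩, hiW⟩⟩
        · -- m in the tail of the window: jump past the window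
          obtain ⟨jD', hj1', hj2', hj3'⟩ := hDsyn (t' k + k + N) (by omega)
          have hW' : t' k + k + N + jD' ∉ W := by
            intro hmem
            obtain ⟨k', hk'⟩ := Set.mem_iUnion.1 hmem
            simp only [Set.mem_Icc] at hk'
            rcases lt_trichotomy k' k with h' | h' | h'
            · have := ht'mono k' k h'
              omega
            · subst h'; omega
            · have := ht'mono k k' h'
              omega
          refine ⟨t' k + k + N + jD' - m, by omega, by omega, ?_⟩
          have : m + (t' k + k + N + jD' - m) = t' k + k + N + jD' := by omega
          rw [this]
          exact ⟨hj3', Or.inl ⟨hj3', hW'⟩⟩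
  · -- the union is A
    ext a
    simp only [Set.mem_iUnion, Set.mem_setOf_eq, Set.mem_inter_iff, Set.mem_union,
      Set.mem_compl_iff]
    constructor
    · intro haA
      refine ⟨{a}, ?_, rfl, Or.inl haA⟩
      intro F
      refine ⟨a + 1, by omega, fun f hf => ?_⟩
      right
      simp only [Set.mem_compl_iff, Set.mem_singleton_iff]
      omega
    · rintro ⟨B, hB, haB, (haA | haBc)⟩
      · exact haA
      · exact absurd haB haBc

theorem dynThick_iff_robustlySyndetic_structure (A : Set ℕ) :
    DynThick A ↔
      ∃ C : Set (Set ℕ), RobustlySyndetic C ∧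
        ∃ H : Set ℕ → Set ℕ, (∀ B ∈ C, Thick (H B)) ∧ A = ⋃ B ∈ C, B ∩ H B := by
  constructor
  · exact forward_direction A
  · rintro ⟨C, hC, H, hH, hA⟩
    exact backward_direction A C hC H hH hA
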